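/- arXiv:2001.02571 — 4 statements merged into one kernel-verified Lean document; each statement's English description precedes it below -/
import Mathlib

section
/- For d ≥ 3, the constant C(d) = (16/Γ(d/2)) ∫₀^∞ e^{−ρ²} ρ^{d+1} / (2(d−2) + 4ρ²) dρ satisfies the upper bound C(d) < (2/(d−2))^{1/2} · Γ((d+1)/2)/Γ(d/2). -/
open MeasureTheory

/-- The blowup constant `C(d)`. -/
noncomputable def blowupC (d : ℕ) : ℝ :=
  (16 / Real.Gamma ((d : ℝ) / 2)) *
    ∫ ρ in Set.Ioi (0 : ℝ),
      Real.exp (-ρ ^ 2) * ρ ^ (d + 1) / (2 * ((d : ℝ) - 2) + 4 * ρ ^ 2)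

open Real Set in
theorem aux_integrable_pow_exp (n : ℕ) :
    IntegrableOn (fun x : ℝ => x ^ n * Real.exp (-x ^ 2)) (Ioi 0) := by
  have h := integrableOn_rpow_mul_exp_neg_mul_sq (b := 1) one_pos
    (s := (n : ℝ)) (lt_of_lt_of_le neg_one_lt_zero (Nat.cast_nonneg n))
  refine h.congr_fun (fun x _ => ?_) measurableSet_Ioi
  dsimp only; rw [Real.rpow_natCast, neg_one_mul]

open Real Set in
theorem aux_integral_pow_exp (n : ℕ) :
    ∫ x in Ioi (0:ℝ), x ^ n * Real.exp (-x ^ 2)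
      = (1/2) * Real.Gamma (((n:ℝ) + 1) / 2) := by
  have h := integral_rpow_mul_exp_neg_rpow (p := 2) (q := (n:ℝ)) two_pos
    (lt_of_lt_of_le neg_one_lt_zero (Nat.cast_nonneg n))
  rw [← h]
  refine setIntegral_congr_fun measurableSet_Ioi (fun x hx => ?_)
  rw [show ((2:ℝ)) = ((2:ℕ):ℝ) by norm_num, Real.rpow_natCast, Real.rpow_natCast]

set_option maxHeartbeats 1000000 in
/-- Upper bound for `C(d)`. -/
theorem blowupC_upper_bound (d : ℕ) (hd : 3 ≤ d) :
    blowupC d < Real.sqrt (2 / ((d : ℝ) - 2)) *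
      (Real.Gamma (((d : ℝ) + 1) / 2) / Real.Gamma ((d : ℝ) / 2)) := by
  have hd3 : (3:ℝ) ≤ (d:ℝ) := by exact_mod_cast hd
  set a : ℝ := (d:ℝ) - 2 with ha
  have ha0 : (0:ℝ) < a := by simp only [ha]; linarith
  have ha1 : (1:ℝ) ≤ a := by simp only [ha]; linarith
  set c : ℝ := Real.sqrt (2 / a) with hc
  have hc0 : 0 < c := Real.sqrt_pos.mpr (by positivity)
  set s : ℝ := Real.sqrt (2 * a) with hs
  have hs0 : 0 < s := Real.sqrt_pos.mpr (by positivity)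
  have hs2 : s ^ 2 = 2 * a := Real.sq_sqrt (by positivity)
  have hcs : c * s = 2 := by
    rw [hc, hs, ← Real.sqrt_mul (by positivity)]
    rw [show 2 / a * (2 * a) = 2 ^ 2 by field_simp, Real.sqrt_sq (by norm_num)]
  have hΓ : 0 < Real.Gamma ((d:ℝ)/2) := Real.Gamma_pos_of_pos (by linarith)
  have hcss : c * s ^ 2 = 2 * s := by rw [pow_two, ← mul_assoc, hcs]
  -- denominator positivity
  have hD : ∀ x : ℝ, 0 < 2 * a + 4 * x ^ 2 := fun x => by nlinarith [sq_nonneg x]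
  set f : ℝ → ℝ := fun x => Real.exp (-x ^ 2) * x ^ (d + 1) / (2 * a + 4 * x ^ 2) with hf
  set g : ℝ → ℝ := fun x => x ^ d * Real.exp (-x ^ 2) with hg
  -- key pointwise inequalities
  have key : ∀ x : ℝ, 0 < x → 16 * x ≤ 2 * c * (2 * a + 4 * x ^ 2) := by
    intro x hx
    have h1 : c * s * x = 2 * x := by rw [hcs]
    nlinarith [mul_nonneg hc0.le (sq_nonneg (s - 2 * x))]
  have keystrict : ∀ x : ℝ, 0 < x → x ≠ s / 2 → 16 * x < 2 * c * (2 * a + 4 * x ^ 2) := by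
    intro x hx hne
    have hne' : s - 2 * x ≠ 0 := fun h => hne (by linarith [sub_eq_zero.mp h])
    have hq : 0 < (s - 2 * x) ^ 2 := by
      rcases (sq_nonneg (s - 2 * x)).eq_or_lt with h | h
      · exact absurd ((pow_eq_zero_iff two_ne_zero).mp h.symm) hne'
      · exact h
    have h1 : c * s * x = 2 * x := by rw [hcs]
    nlinarith [mul_pos hc0 hq]
  -- integrability
  have hgint : IntegrableOn g (Set.Ioi 0) := aux_integrable_pow_exp d
  have hg1int : IntegrableOn (fun x : ℝ => x ^ (d+1) * Real.exp (-x ^ 2)) (Set.Ioi 0) :=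
    aux_integrable_pow_exp (d+1)
  have hfc : Continuous f := by
    apply Continuous.div (by fun_prop) (by fun_prop)
    exact fun x => (hD x).ne'
  have hfint : IntegrableOn f (Set.Ioi 0) := by
    refine Integrable.mono' (hg1int.const_mul (1/2)) hfc.aestronglyMeasurable.restrict ?_
    filter_upwards [ae_restrict_mem measurableSet_Ioi] with x hx
    have hx0 : (0:ℝ) < x := hx
    have hE := Real.exp_pos (-x ^ 2)
    have hP : (0:ℝ) ≤ x ^ (d+1) := pow_nonneg hx0.le _
    rw [Real.norm_eq_abs, abs_of_nonneg (div_nonneg (by positivity) (hD x).le)]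
    rw [div_le_iff₀ (hD x)]
    calc Real.exp (-x ^ 2) * x ^ (d + 1)
        = (x ^ (d+1) * Real.exp (-x ^ 2)) * 1 := by ring
      _ ≤ (x ^ (d+1) * Real.exp (-x ^ 2)) * (a + 2 * x ^ 2) := by
          refine mul_le_mul_of_nonneg_left ?_ (mul_nonneg hP hE.le)
          nlinarith [sq_nonneg x]
      _ = 1 / 2 * (x ^ (d + 1) * Real.exp (-x ^ 2)) * (2 * a + 4 * x ^ 2) := by ring
  -- the difference function
  set h : ℝ → ℝ := fun x => 2 * c * g x - 16 * f x with hh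
  have hhint : IntegrableOn h (Set.Ioi 0) := (hgint.const_mul _).sub (hfint.const_mul _)
  have hle : ∀ x : ℝ, 0 < x → 16 * f x ≤ 2 * c * g x := by
    intro x hx
    have hE := Real.exp_pos (-x ^ 2)
    have hP : (0:ℝ) < x ^ d := pow_pos hx d
    simp only [hf, hg]
    rw [show (16:ℝ) * (Real.exp (-x ^ 2) * x ^ (d + 1) / (2 * a + 4 * x ^ 2))
      = 16 * (Real.exp (-x ^ 2) * x ^ (d + 1)) / (2 * a + 4 * x ^ 2) by ring,
      div_le_iff₀ (hD x)]
    have := mul_le_mul_of_nonneg_left (key x hx) (mul_pos hP hE).le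
    nlinarith [pow_succ x d]
  have hlt : ∀ x : ℝ, 0 < x → x ≠ s / 2 → 16 * f x < 2 * c * g x := by
    intro x hx hne
    have hE := Real.exp_pos (-x ^ 2)
    have hP : (0:ℝ) < x ^ d := pow_pos hx d
    simp only [hf, hg]
    rw [show (16:ℝ) * (Real.exp (-x ^ 2) * x ^ (d + 1) / (2 * a + 4 * x ^ 2))
      = 16 * (Real.exp (-x ^ 2) * x ^ (d + 1)) / (2 * a + 4 * x ^ 2) by ring,
      div_lt_iff₀ (hD x)]
    have := mul_lt_mul_of_pos_left (keystrict x hx hne) (mul_pos hP hE)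
    nlinarith [pow_succ x d]
  -- positivity of the integral of h
  have hpos : 0 < ∫ x in Set.Ioi (0:ℝ), h x := by
    rw [setIntegral_pos_iff_support_of_nonneg_ae ?nonneg hhint]
    case nonneg =>
      filter_upwards [ae_restrict_mem measurableSet_Ioi] with x hx
      have := hle x hx
      simp only [hh, Pi.zero_apply]
      linarith
    have hsub : Set.Ioi (0:ℝ) \ {s/2} ⊆ Function.support h ∩ Set.Ioi 0 := by
      rintro x ⟨hx1, hx2⟩
      refine ⟨?_, hx1⟩
      have := hlt x hx1 (by simpa using hx2)
      simp only [hh, Function.mem_support]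
      intro hzero
      rw [sub_eq_zero] at hzero
      linarith [hzero]
    refine lt_of_lt_of_le ?_ (measure_mono hsub)
    rw [measure_diff_null (measure_singleton _), Real.volume_Ioi]
    simp
  -- compute
  have hsplit : ∫ x in Set.Ioi (0:ℝ), h x
      = 2 * c * (∫ x in Set.Ioi (0:ℝ), g x) - 16 * ∫ x in Set.Ioi (0:ℝ), f x := by
    rw [hh]
    rw [integral_sub (hgint.const_mul _) (hfint.const_mul _),
      integral_const_mul, integral_const_mul]
  have hgval : ∫ x in Set.Ioi (0:ℝ), g x = (1/2) * Real.Gamma (((d:ℝ) + 1) / 2) :=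
    aux_integral_pow_exp d
  have hmain : 16 * (∫ x in Set.Ioi (0:ℝ), f x) < c * Real.Gamma (((d:ℝ) + 1) / 2) := by
    rw [hsplit, hgval] at hpos
    linarith
  have hblow : blowupC d = 16 * (∫ x in Set.Ioi (0:ℝ), f x) / Real.Gamma ((d:ℝ)/2) := by
    rw [blowupC, hf]
    ring
  rw [hblow, ← mul_div_assoc]
  exact div_lt_div_of_pos_right hmain hΓ
end

section
/- For d ≥ 3, the constant C(d) = (16/Γ(d/2)) ∫₀^∞ e^{−ρ²} ρ^{d+1} / (2(d−2) + 4ρ²) dρ satisfies the lower bound C(d) > (2/(d−1)) · (Γ((d+1)/2)/Γ(d/2))². -/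
open MeasureTheory
open Real Set

lemma neg_one_lt_cast (k : ℕ) : (-1:ℝ) < k :=
  (neg_lt_zero.mpr one_pos).trans_le (Nat.cast_nonneg k)

lemma gauss_moment_integrableOn (k : ℕ) :
    IntegrableOn (fun x : ℝ => Real.exp (-x ^ 2) * x ^ k) (Ioi 0) := by
  have h := integrableOn_rpow_mul_exp_neg_rpow (s := k) (p := 2)
    (neg_one_lt_cast k) two_pos
  refine (h.congr_fun (fun x hx => ?_) measurableSet_Ioi)
  have hx0 : (0:ℝ) < x := hx
  beta_reduce
  rw [rpow_natCast, ← rpow_natCast x 2]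
  push_cast
  ring

lemma gauss_moment (k : ℕ) :
    ∫ x in Ioi (0:ℝ), Real.exp (-x ^ 2) * x ^ k = Real.Gamma (((k : ℝ) + 1) / 2) / 2 := by
  have h := integral_rpow_mul_exp_neg_rpow (p := 2) (q := k) two_pos (neg_one_lt_cast k)
  rw [setIntegral_congr_fun measurableSet_Ioi (g := fun x : ℝ => x ^ (k:ℝ) * Real.exp (-x ^ (2:ℝ)))
    (fun x hx => ?_), h]
  · ring
  · have hx0 : (0:ℝ) < x := hx
    show Real.exp (-x ^ 2) * x ^ k = x ^ (k:ℝ) * Real.exp (-x ^ (2:ℝ))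
    rw [rpow_natCast, ← rpow_natCast x 2]
    push_cast
    ring


set_option maxHeartbeats 1000000 in
/-- Lower bound for `C(d)`. -/
theorem blowupC_lower_bound (d : ℕ) (hd : 3 ≤ d) :
    (2 / ((d : ℝ) - 1)) *
      (Real.Gamma (((d : ℝ) + 1) / 2) / Real.Gamma ((d : ℝ) / 2)) ^ 2 < blowupC d := by
  obtain ⟨m, rfl⟩ : ∃ m, d = m + 3 := ⟨d - 3, by omega⟩
  set D : ℝ := ((m + 3 : ℕ) : ℝ) with hDdef
  have hD : D = (m : ℝ) + 3 := by push_cast [hDdef]; ring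
  have hm0 : (0:ℝ) ≤ m := Nat.cast_nonneg m
  set gA : ℝ := Real.Gamma (D / 2) with hgA
  set gB : ℝ := Real.Gamma ((D + 1) / 2) with hgB
  have hgApos : 0 < gA := Real.Gamma_pos_of_pos (by rw [hD]; positivity)
  have hgBpos : 0 < gB := Real.Gamma_pos_of_pos (by rw [hD]; positivity)
  set G : ℝ := gB / 2 with hG
  set J : ℝ := (2 * D - 2) * gA with hJdef
  have hGpos : 0 < G := by positivity
  have hJpos : 0 < J := by rw [hJdef, hD]; nlinarith
  set l : ℝ := G / J with hl
  have hlpos : 0 < l := div_pos hGpos hJpos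
  have hwpos : ∀ ρ : ℝ, 0 < 2 * (D - 2) + 4 * ρ ^ 2 := fun ρ => by
    rw [hD]; nlinarith [sq_nonneg ρ]
  have hw2 : ∀ ρ : ℝ, 2 ≤ 2 * (D - 2) + 4 * ρ ^ 2 := fun ρ => by
    rw [hD]; nlinarith [sq_nonneg ρ]
  set f1 : ℝ → ℝ := fun ρ => Real.exp (-ρ ^ 2) * ρ ^ (m + 4) / (2 * (D - 2) + 4 * ρ ^ 2)
    with hf1
  set f2 : ℝ → ℝ := fun ρ => Real.exp (-ρ ^ 2) * ρ ^ (m + 2) * (2 * (D - 2) + 4 * ρ ^ 2)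
    with hf2
  set f3 : ℝ → ℝ := fun ρ => Real.exp (-ρ ^ 2) * ρ ^ (m + 3) with hf3
  -- integrability
  have int1 : IntegrableOn f1 (Ioi 0) := by
    refine Integrable.mono' ((gauss_moment_integrableOn (m + 4)).const_mul (1/2)) ?_ ?_
    · exact (Continuous.div (by continuity) (by continuity)
        (fun x => (hwpos x).ne')).aestronglyMeasurable
    · filter_upwards [ae_restrict_mem measurableSet_Ioi] with ρ hρ
      have hρ0 : (0:ℝ) < ρ := hρ
      have hnum : 0 ≤ Real.exp (-ρ ^ 2) * ρ ^ (m + 4) := by positivity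
      have h1 : 0 ≤ f1 ρ := div_nonneg hnum (hwpos ρ).le
      simp only [hf1] at h1 ⊢
      rw [Real.norm_eq_abs, abs_of_nonneg h1, div_le_iff₀ (hwpos ρ)]
      have := hw2 ρ
      nlinarith
  have int2 : IntegrableOn f2 (Ioi 0) := by
    refine IntegrableOn.congr_fun
      (f := fun x : ℝ => (2*(D-2)) * (Real.exp (-x ^ 2) * x ^ (m+2))
        + 4 * (Real.exp (-x ^ 2) * x ^ (m+4)))
      (((gauss_moment_integrableOn (m + 2)).const_mul (2*(D-2))).add
        ((gauss_moment_integrableOn (m + 4)).const_mul 4)) (fun x hx => ?_) measurableSet_Ioi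
    simp only [hf2]; ring
  have int3 : IntegrableOn f3 (Ioi 0) := gauss_moment_integrableOn (m + 3)
  -- moment values
  have e2 : (((m+2:ℕ):ℝ) + 1) / 2 = D / 2 := by push_cast [hD]; ring
  have e3 : (((m+3:ℕ):ℝ) + 1) / 2 = (D + 1) / 2 := by push_cast [hD]; ring
  have e4 : (((m+4:ℕ):ℝ) + 1) / 2 = D / 2 + 1 := by push_cast [hD]; ring
  have hM2 : ∫ x in Ioi (0:ℝ), Real.exp (-x ^ 2) * x ^ (m+2) = gA / 2 := by
    rw [gauss_moment, e2, hgA]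
  have hM3 : ∫ x in Ioi (0:ℝ), f3 x = G := by
    rw [hf3, gauss_moment, e3, hG, hgB]
  have hM4 : ∫ x in Ioi (0:ℝ), Real.exp (-x ^ 2) * x ^ (m+4) = (D / 2) * gA / 2 := by
    rw [gauss_moment, e4, Real.Gamma_add_one (by rw [hD]; positivity), hgA]
  have hJint : ∫ x in Ioi (0:ℝ), f2 x = J := by
    have h : ∫ x in Ioi (0:ℝ), f2 x =
        ∫ x in Ioi (0:ℝ), ((2*(D-2)) * (Real.exp (-x ^ 2) * x ^ (m+2))
          + 4 * (Real.exp (-x ^ 2) * x ^ (m+4))) := by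
      refine setIntegral_congr_fun measurableSet_Ioi (fun x hx => ?_)
      simp only [hf2]; ring
    rw [h, integral_add (((gauss_moment_integrableOn (m + 2)).const_mul _))
      ((gauss_moment_integrableOn (m + 4)).const_mul _), integral_const_mul,
      integral_const_mul, hM2, hM4, hJdef, hD]
    ring
  -- the nonnegative function F
  set F : ℝ → ℝ := fun ρ => (1/(2*l)) * f1 ρ + (l/2) * f2 ρ - f3 ρ with hF
  have key : ∀ ρ : ℝ, F ρ =
      Real.exp (-ρ ^ 2) * ρ ^ (m+2) * (ρ - l * (2 * (D - 2) + 4 * ρ ^ 2)) ^ 2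
        / (2 * l * (2 * (D - 2) + 4 * ρ ^ 2)) := by
    intro ρ
    have hw := (hwpos ρ).ne'
    have hlne := hlpos.ne'
    simp only [hF, hf1, hf2, hf3]
    generalize 2 * (D - 2) + 4 * ρ ^ 2 = W at hw ⊢
    field_simp
    ring
  have intF : IntegrableOn F (Ioi 0) :=
    ((int1.const_mul _).add (int2.const_mul _)).sub int3
  have hFnonneg : ∀ ρ ∈ Ioi (0:ℝ), 0 ≤ F ρ := by
    intro ρ hρ
    have hρ0 : (0:ℝ) < ρ := hρ
    rw [key ρ]
    have h1 := hwpos ρ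
    positivity
  -- strict positivity of ∫ F
  have hpos : 0 < ∫ ρ in Ioi (0:ℝ), F ρ := by
    rw [setIntegral_pos_iff_support_of_nonneg_ae ?_ intF]
    · set P : Polynomial ℝ := Polynomial.C (4*l) * Polynomial.X ^ 2 - Polynomial.X
        + Polynomial.C (2*l*(D-2)) with hP
      have heval : ∀ x : ℝ, P.eval x = 4*l*x^2 - x + 2*l*(D-2) := by
        intro x; simp [hP]
      have hPne : P ≠ 0 := by
        intro h
        have h0 : P.eval 0 = 0 := by rw [h]; simp
        rw [heval 0] at h0
        have : (1:ℝ) ≤ D - 2 := by rw [hD]; linarith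
        nlinarith
      have hZfin : {x : ℝ | P.IsRoot x}.Finite := Polynomial.finite_setOf_isRoot hPne
      have hsub : Ioi (0:ℝ) \ {x : ℝ | P.IsRoot x} ⊆ Function.support F ∩ Ioi 0 := by
        rintro ρ ⟨hρ1, hρ2⟩
        refine ⟨?_, hρ1⟩
        have hρ0 : (0:ℝ) < ρ := hρ1
        have hne : ρ - l * (2 * (D - 2) + 4 * ρ ^ 2) ≠ 0 := by
          intro h
          apply hρ2
          show P.IsRoot ρ
          rw [Polynomial.IsRoot, heval]
          linarith
        have hFpos : 0 < F ρ := by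
          rw [key ρ]
          have h1 := hwpos ρ
          positivity
        exact hFpos.ne'
      calc (0:ENNReal) < volume (Ioi (0:ℝ) \ {x : ℝ | P.IsRoot x}) := by
            rw [measure_diff_null (hZfin.measure_zero _), Real.volume_Ioi]
            exact ENNReal.zero_lt_top
        _ ≤ volume (Function.support F ∩ Ioi 0) := measure_mono hsub
    · filter_upwards [ae_restrict_mem measurableSet_Ioi] with ρ hρ
      exact hFnonneg ρ hρ
  -- expand ∫ F
  have hexp : (∫ ρ in Ioi (0:ℝ), F ρ) =
      (1/(2*l)) * (∫ ρ in Ioi (0:ℝ), f1 ρ) + (l/2) * J - G := by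
    have hadd : IntegrableOn (fun ρ => (1/(2*l)) * f1 ρ + (l/2) * f2 ρ) (Ioi 0) :=
      (int1.const_mul _).add (int2.const_mul _)
    simp only [hF]
    rw [integral_sub hadd int3,
      integral_add (int1.const_mul _) (int2.const_mul _), integral_const_mul,
      integral_const_mul, hJint, hM3]
  -- conclude
  have hI : G ^ 2 / J < ∫ ρ in Ioi (0:ℝ), f1 ρ := by
    rw [hexp] at hpos
    have hlJm : l * J = G := by
      rw [hl]; exact div_mul_cancel₀ G hJpos.ne'
    have hlJ : (l/2) * J = G / 2 := by
      rw [div_mul_eq_mul_div, hlJm]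
    rw [hlJ] at hpos
    have h2l : 0 < 2 * l := by linarith
    have hhalf : G / 2 < (1/(2*l)) * ∫ ρ in Ioi (0:ℝ), f1 ρ := by linarith
    calc G ^ 2 / J = (2*l) * (G / 2) := by rw [hl]; ring
      _ < (2*l) * ((1/(2*l)) * ∫ ρ in Ioi (0:ℝ), f1 ρ) := (mul_lt_mul_iff_right₀ h2l).mpr hhalf
      _ = ∫ ρ in Ioi (0:ℝ), f1 ρ := by field_simp
  -- final algebra
  have hblow : blowupC (m+3) = (16 / gA) * ∫ ρ in Ioi (0:ℝ), f1 ρ := by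
    simp only [blowupC, hf1, ← hDdef, ← hgA]
  rw [hblow]
  have h16 : 0 < 16 / gA := by positivity
  have hE : (D - 1) ≠ 0 := by rw [hD]; nlinarith
  have hE2 : (2 * D - 2) ≠ 0 := by rw [hD]; nlinarith
  calc (2 / (D - 1)) * (gB / gA) ^ 2 = (16 / gA) * (G ^ 2 / J) := by
        rw [hG, hJdef]
        field_simp
        ring
    _ < (16 / gA) * ∫ ρ in Ioi (0:ℝ), f1 ρ := (mul_lt_mul_iff_right₀ h16).mpr hI
end

section
/- The constant C(d) = (16/Γ(d/2)) ∫₀^∞ e^{−ρ²} ρ^{d+1} / (2(d−2) + 4ρ²) dρ satisfies C(d) → 1 as d → ∞. -/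
open MeasureTheory Filter

section Aux

open Set Real


lemma gmom_int (m : ℕ) : IntegrableOn (fun ρ : ℝ => Real.exp (-ρ^2) * ρ^m) (Set.Ioi 0) := by
  have hm : (-1:ℝ) < (m:ℝ) := lt_of_lt_of_le (by norm_num) (Nat.cast_nonneg m)
  have := integrableOn_rpow_mul_exp_neg_mul_sq (b := 1) one_pos hm
  refine this.congr_fun (fun x hx => ?_) measurableSet_Ioi
  simp only [Real.rpow_natCast]
  ring_nf

lemma gmom_val (m : ℕ) : ∫ ρ in Set.Ioi (0:ℝ), Real.exp (-ρ^2) * ρ^m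
    = Real.Gamma (((m:ℝ)+1)/2) / 2 := by
  have hm : (-1:ℝ) < (m:ℝ) := lt_of_lt_of_le (by norm_num) (Nat.cast_nonneg m)
  have h := integral_rpow_mul_exp_neg_rpow (p := 2) (q := (m:ℝ)) two_pos hm
  rw [show ∫ ρ in Set.Ioi (0:ℝ), Real.exp (-ρ^2) * ρ^m
      = ∫ x in Set.Ioi (0:ℝ), x ^ (m:ℝ) * Real.exp (-x ^ (2:ℝ)) from
    setIntegral_congr_fun measurableSet_Ioi (fun x hx => by
      rw [Real.rpow_natCast, show (2:ℝ) = ((2:ℕ):ℝ) by norm_num, Real.rpow_natCast]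
      ring), h]
  ring

lemma core_upper {N t : ℝ} (hN : 0 ≤ N) (ht : 0 ≤ t) :
    t / (2*(N+1) + 4*t) ≤ ((N+3)^2 + 2*(N+1)*t) / (16*(N+2)^2) := by
  rw [div_le_div_iff₀ (by positivity) (by positivity)]
  nlinarith [mul_nonneg (by linarith : (0:ℝ) ≤ N+1) (sq_nonneg (2*t-(N+3)))]

lemma core_lower {N t : ℝ} (hN : 0 ≤ N) (ht : 0 ≤ t) :
    ((3*N+7)*t - 2*t^2) / (8*(N+2)^2) ≤ t / (2*(N+1) + 4*t) := by
  rw [div_le_div_iff₀ (by positivity) (by positivity)]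
  nlinarith [mul_nonneg ht (sq_nonneg (2*t-(N+3)))]


end Aux

section Aux2

open Set Real

lemma blowup_bounds (n : ℕ) :
    1 - (1/((n:ℝ)+2))^2 ≤ blowupC (n+3) ∧ blowupC (n+3) ≤ 1 + 1/((n:ℝ)+2) := by
  set N : ℝ := (n:ℝ) with hNdef
  have hN : (0:ℝ) ≤ N := Nat.cast_nonneg n
  have hk : (0:ℝ) < (N+3)/2 := by positivity
  have hΓ : 0 < Real.Gamma ((N+3)/2) := Real.Gamma_pos_of_pos hk
  -- rewrite blowupC
  have hC : blowupC (n+3) = (16 / Real.Gamma ((N+3)/2)) *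
      ∫ ρ in Set.Ioi (0:ℝ), Real.exp (-ρ^2) * ρ^(n+4) / (2*(N+1) + 4*ρ^2) := by
    unfold blowupC
    push_cast
    congr 1
    refine setIntegral_congr_fun measurableSet_Ioi (fun x hx => ?_)
    norm_num
    ring_nf
    rw [hNdef]
  -- integrability of the main integrand
  have hden : ∀ x:ℝ, (0:ℝ) < 2*(N+1) + 4*x^2 := fun x => by positivity
  have hfc : Continuous fun ρ:ℝ => Real.exp (-ρ^2) * ρ^(n+4) / (2*(N+1) + 4*ρ^2) := by
    apply Continuous.div (by fun_prop) (by fun_prop) (fun x => (hden x).ne')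
  have hf : IntegrableOn (fun ρ:ℝ => Real.exp (-ρ^2) * ρ^(n+4) / (2*(N+1) + 4*ρ^2))
      (Set.Ioi 0) := by
    apply Integrable.mono' ((gmom_int (n+4)).const_mul (1/(2*(N+1))))
      (hfc.aestronglyMeasurable.restrict)
    filter_upwards [ae_restrict_mem measurableSet_Ioi] with x hx
    have hx2 : (0:ℝ) ≤ Real.exp (-x^2) * x^(n+4) :=
      mul_nonneg (Real.exp_pos _).le (pow_nonneg (le_of_lt hx) _)
    rw [Real.norm_eq_abs, abs_of_nonneg (div_nonneg hx2 (hden x).le)]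
    have h2 : (0:ℝ) < 2*(N+1) := by linarith
    calc Real.exp (-x^2) * x^(n+4) / (2*(N+1) + 4*x^2)
        ≤ Real.exp (-x^2) * x^(n+4) / (2*(N+1)) := by
          gcongr
          nlinarith [sq_nonneg x]
      _ = 1/(2*(N+1)) * (Real.exp (-x^2) * x^(n+4)) := by ring
  -- coefficients
  set c1 : ℝ := (N+3)^2 / (16*(N+2)^2) with hc1
  set c2 : ℝ := 2*(N+1) / (16*(N+2)^2) with hc2
  set c3 : ℝ := (3*N+7) / (8*(N+2)^2) with hc3
  set c4 : ℝ := 2 / (8*(N+2)^2) with hc4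
  -- Gamma moment values
  have hG1 : ∫ ρ in Set.Ioi (0:ℝ), Real.exp (-ρ^2) * ρ^(n+2)
      = Real.Gamma ((N+3)/2) / 2 := by
    rw [gmom_val]; push_cast; ring_nf; rw [hNdef]
  have hG2 : ∫ ρ in Set.Ioi (0:ℝ), Real.exp (-ρ^2) * ρ^(n+4)
      = ((N+3)/2) * Real.Gamma ((N+3)/2) / 2 := by
    rw [gmom_val]; push_cast
    rw [show ((N:ℝ)+4+1)/2 = (N+3)/2 + 1 by ring, Real.Gamma_add_one hk.ne']
  have hG3 : ∫ ρ in Set.Ioi (0:ℝ), Real.exp (-ρ^2) * ρ^(n+6)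
      = ((N+3)/2+1) * (((N+3)/2) * Real.Gamma ((N+3)/2)) / 2 := by
    rw [gmom_val]; push_cast
    rw [show ((N:ℝ)+6+1)/2 = ((N+3)/2 + 1) + 1 by ring, Real.Gamma_add_one (by positivity),
      Real.Gamma_add_one hk.ne']
  constructor
  · -- lower bound
    have hmono : (∫ ρ in Set.Ioi (0:ℝ),
          (c3 * (Real.exp (-ρ^2) * ρ^(n+4)) - c4 * (Real.exp (-ρ^2) * ρ^(n+6))))
        ≤ ∫ ρ in Set.Ioi (0:ℝ), Real.exp (-ρ^2) * ρ^(n+4) / (2*(N+1) + 4*ρ^2) := by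
      refine setIntegral_mono_on
        (((gmom_int (n+4)).const_mul c3).sub ((gmom_int (n+6)).const_mul c4)) hf
        measurableSet_Ioi (fun x hx => ?_)
      have key := core_lower (N := N) (t := x^2) hN (sq_nonneg x)
      have hP : (0:ℝ) ≤ Real.exp (-x^2) * x^(n+2) :=
        mul_nonneg (Real.exp_pos _).le (pow_nonneg (le_of_lt hx) _)
      have := mul_le_mul_of_nonneg_left key hP
      calc c3 * (Real.exp (-x^2) * x^(n+4)) - c4 * (Real.exp (-x^2) * x^(n+6))
          = (Real.exp (-x^2) * x^(n+2)) * (((3*N+7)*x^2 - 2*(x^2)^2) / (8*(N+2)^2)) := by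
            rw [hc3, hc4]; ring
        _ ≤ (Real.exp (-x^2) * x^(n+2)) * (x^2 / (2*(N+1) + 4*x^2)) := this
        _ = Real.exp (-x^2) * x^(n+4) / (2*(N+1) + 4*x^2) := by ring
    have hval : (∫ ρ in Set.Ioi (0:ℝ),
          (c3 * (Real.exp (-ρ^2) * ρ^(n+4)) - c4 * (Real.exp (-ρ^2) * ρ^(n+6))))
        = c3 * (((N+3)/2) * Real.Gamma ((N+3)/2) / 2)
          - c4 * (((N+3)/2+1) * (((N+3)/2) * Real.Gamma ((N+3)/2)) / 2) := by
      rw [integral_sub ((gmom_int (n+4)).const_mul c3) ((gmom_int (n+6)).const_mul c4),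
        integral_const_mul, integral_const_mul, hG2, hG3]
    rw [hC]
    have := mul_le_mul_of_nonneg_left hmono ((div_pos (by norm_num : (0:ℝ) < 16) hΓ).le)
    refine le_trans (le_of_eq ?_) this
    rw [hval, hc3, hc4]
    field_simp
    ring
  · -- upper bound
    have hmono : (∫ ρ in Set.Ioi (0:ℝ), Real.exp (-ρ^2) * ρ^(n+4) / (2*(N+1) + 4*ρ^2))
        ≤ ∫ ρ in Set.Ioi (0:ℝ),
          (c1 * (Real.exp (-ρ^2) * ρ^(n+2)) + c2 * (Real.exp (-ρ^2) * ρ^(n+4))) := by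
      refine setIntegral_mono_on hf
        (((gmom_int (n+2)).const_mul c1).add ((gmom_int (n+4)).const_mul c2))
        measurableSet_Ioi (fun x hx => ?_)
      have key := core_upper (N := N) (t := x^2) hN (sq_nonneg x)
      have hP : (0:ℝ) ≤ Real.exp (-x^2) * x^(n+2) :=
        mul_nonneg (Real.exp_pos _).le (pow_nonneg (le_of_lt hx) _)
      have := mul_le_mul_of_nonneg_left key hP
      calc Real.exp (-x^2) * x^(n+4) / (2*(N+1) + 4*x^2)
          = (Real.exp (-x^2) * x^(n+2)) * (x^2 / (2*(N+1) + 4*x^2)) := by ring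
        _ ≤ (Real.exp (-x^2) * x^(n+2)) * (((N+3)^2 + 2*(N+1)*x^2) / (16*(N+2)^2)) := this
        _ = c1 * (Real.exp (-x^2) * x^(n+2)) + c2 * (Real.exp (-x^2) * x^(n+4)) := by
            rw [hc1, hc2]; ring
    have hval : (∫ ρ in Set.Ioi (0:ℝ),
          (c1 * (Real.exp (-ρ^2) * ρ^(n+2)) + c2 * (Real.exp (-ρ^2) * ρ^(n+4))))
        = c1 * (Real.Gamma ((N+3)/2) / 2)
          + c2 * (((N+3)/2) * Real.Gamma ((N+3)/2) / 2) := by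
      rw [integral_add ((gmom_int (n+2)).const_mul c1) ((gmom_int (n+4)).const_mul c2),
        integral_const_mul, integral_const_mul, hG1, hG2]
    rw [hC]
    have := mul_le_mul_of_nonneg_left hmono ((div_pos (by norm_num : (0:ℝ) < 16) hΓ).le)
    refine le_trans this (le_of_eq ?_)
    rw [hval, hc1, hc2]
    field_simp
    ring

end Aux2

/-- `C(d) → 1` as `d → ∞`. -/
theorem blowupC_tendsto_one :
    Tendsto (fun d : ℕ => blowupC d) atTop (nhds 1) := by
  have h1 : Tendsto (fun d : ℕ => (d:ℝ) - 1) atTop atTop := by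
    simpa [sub_eq_add_neg] using
      tendsto_atTop_add_const_right atTop (-1 : ℝ) tendsto_natCast_atTop_atTop
  have he : Tendsto (fun d : ℕ => 1/((d:ℝ)-1)) atTop (nhds 0) := by
    simpa [one_div, Pi.inv_def] using h1.inv_tendsto_atTop
  have hlo : Tendsto (fun d : ℕ => 1 - (1/((d:ℝ)-1))^2) atTop (nhds 1) := by
    have := (tendsto_const_nhds : Tendsto (fun _ : ℕ => (1:ℝ)) atTop (nhds 1)).sub (he.pow 2)
    simpa using this
  have hhi : Tendsto (fun d : ℕ => 1 + 1/((d:ℝ)-1)) atTop (nhds 1) := by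
    have := (tendsto_const_nhds : Tendsto (fun _ : ℕ => (1:ℝ)) atTop (nhds 1)).add he
    simpa using this
  refine tendsto_of_tendsto_of_tendsto_of_le_of_le' hlo hhi ?_ ?_
  · filter_upwards [eventually_ge_atTop 3] with d hd
    obtain ⟨n, rfl⟩ : ∃ n, d = n + 3 := ⟨d - 3, by omega⟩
    have h := (blowup_bounds n).1
    have hcast : ((n+3:ℕ):ℝ) - 1 = (n:ℝ) + 2 := by push_cast; ring
    rw [hcast]
    exact h
  · filter_upwards [eventually_ge_atTop 3] with d hd
    obtain ⟨n, rfl⟩ : ∃ n, d = n + 3 := ⟨d - 3, by omega⟩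
    have h := (blowup_bounds n).2
    have hcast : ((n+3:ℕ):ℝ) - 1 = (n:ℝ) + 2 := by push_cast; ring
    rw [hcast]
    exact h
end

section
/- Let d ≥ 3 and let M : (0,∞) → ℝ be a C¹ function with 0 ≤ M(y) ≤ 2 ε σ_d y^{d−2} for all y > 0, where ε ∈ (0,1). Define f(y) = exp( y²/4 − ∫_y^{y*} M(s)/(σ_d s^{d−1}) ds ) for a fixed y* > 0 (assuming the integral ∫₀^{y*} M(s)/(σ_d s^{d−1}) ds is finite). Then f(y) → ∞ as y → ∞, and lim_{y→∞} ( ∫_{y*}^{y} s f(s) ds ) / ( 2 f(y) ) = 1. -/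
open MeasureTheory Filter intervalIntegral

theorem aux_asym (ε ystar : ℝ) (hε0 : 0 < ε) (hy : 0 < ystar)
    (h : ℝ → ℝ) (hc : ContinuousOn h (Set.Ioi 0))
    (h0 : ∀ s : ℝ, 0 < s → 0 ≤ h s) (hb : ∀ s : ℝ, 0 < s → h s ≤ 2 * ε / s) :
    Tendsto (fun y : ℝ => Real.exp (y ^ 2 / 4 + ∫ s in ystar..y, h s)) atTop atTop ∧
    Tendsto (fun y : ℝ =>
        (∫ s in ystar..y, s * Real.exp (s ^ 2 / 4 + ∫ τ in ystar..s, h τ)) /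
          (2 * Real.exp (y ^ 2 / 4 + ∫ s in ystar..y, h s))) atTop (nhds 1) := by
  set G : ℝ → ℝ := fun y => ∫ s in ystar..y, h s with hG
  set F : ℝ → ℝ := fun y => Real.exp (y ^ 2 / 4 + G y) with hF
  have hFpos : ∀ y : ℝ, 0 < F y := fun y => Real.exp_pos _
  -- interval integrability of h on positive intervals
  have hsub : ∀ a b : ℝ, 0 < a → 0 < b → Set.uIcc a b ⊆ Set.Ioi 0 := by
    intro a b ha hb' x hx
    exact Set.mem_Ioi.mpr ((lt_min ha hb').trans_le hx.1)
  have hii : ∀ a b : ℝ, 0 < a → 0 < b → IntervalIntegrable h volume a b := by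
    intro a b ha hb'
    exact (hc.mono (hsub a b ha hb')).intervalIntegrable
  have hGd : ∀ y : ℝ, 0 < y → HasDerivAt G (h y) y := by
    intro y hy'
    exact integral_hasDerivAt_right (hii ystar y hy hy')
      (ContinuousOn.stronglyMeasurableAtFilter isOpen_Ioi hc y hy')
      (hc.continuousAt (isOpen_Ioi.mem_nhds hy'))
  have hGcont : ContinuousOn G (Set.Ioi 0) := fun y hy' =>
    ((hGd y hy').continuousAt).continuousWithinAt
  have hFcont : ContinuousOn F (Set.Ioi 0) :=
    Real.continuous_exp.comp_continuousOn
      (((continuous_pow 2).div_const 4).continuousOn.add hGcont)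
  -- G b - G a = ∫ a..b
  have hGadd : ∀ a b : ℝ, 0 < a → 0 < b → G a + (∫ s in a..b, h s) = G b := by
    intro a b ha hb'
    exact integral_add_adjacent_intervals (hii ystar a hy ha) (hii a b ha hb')
  -- monotonicity of the exponent
  have hemono : ∀ a b : ℝ, ystar ≤ a → a ≤ b → F a ≤ F b := by
    intro a b ha hab
    have ha0 : 0 < a := lt_of_lt_of_le hy ha
    have hb0 : 0 < b := lt_of_lt_of_le ha0 hab
    have hInn : (0:ℝ) ≤ ∫ s in a..b, h s := by
      apply intervalIntegral.integral_nonneg hab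
      intro x hx
      exact h0 x (lt_of_lt_of_le ha0 hx.1)
    have : G a ≤ G b := by
      rw [← hGadd a b ha0 hb0]; linarith
    apply Real.exp_le_exp.mpr
    have : a ^ 2 ≤ b ^ 2 := by nlinarith
    linarith
  have hGnn : ∀ y : ℝ, ystar ≤ y → 0 ≤ G y := by
    intro y hy'
    apply intervalIntegral.integral_nonneg hy'
    intro x hx
    exact h0 x (lt_of_lt_of_le hy hx.1)
  -- Part 1
  have part1 : Tendsto F atTop atTop := by
    apply tendsto_atTop_mono' atTop (f₁ := fun y => Real.exp (y ^ 2 / 4))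
    · filter_upwards [eventually_ge_atTop ystar] with y hy'
      exact Real.exp_le_exp.mpr (by linarith [hGnn y hy'])
    · apply Real.tendsto_exp_atTop.comp
      exact (tendsto_pow_atTop two_ne_zero).atTop_div_const (by norm_num)
  -- derivative of 2F
  have hdF : ∀ x : ℝ, 0 < x →
      HasDerivAt (fun y => 2 * F y) (x * F x + 2 * (h x * F x)) x := by
    intro x hx
    have he : HasDerivAt (fun y : ℝ => y ^ 2 / 4 + G y) (x / 2 + h x) x := by
      have h1 : HasDerivAt (fun y : ℝ => y ^ 2 / 4) (x / 2) x := by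
        have := (hasDerivAt_pow 2 x).div_const 4
        simpa using this.congr_deriv (by ring)
      exact h1.add (hGd x hx)
    have := (he.exp).const_mul 2
    exact this.congr_deriv (by simp only [hF]; ring)
  -- integrability of the pieces
  have hiiN : ∀ a b : ℝ, 0 < a → 0 < b → IntervalIntegrable (fun s => s * F s) volume a b := by
    intro a b ha hb'
    exact ((continuousOn_id.mul hFcont).mono (hsub a b ha hb')).intervalIntegrable
  have hiiI : ∀ a b : ℝ, 0 < a → 0 < b → IntervalIntegrable (fun s => h s * F s) volume a b := by
    intro a b ha hb'
    exact ((hc.mul hFcont).mono (hsub a b ha hb')).intervalIntegrable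
  set N : ℝ → ℝ := fun y => ∫ s in ystar..y, s * F s with hN
  set I : ℝ → ℝ := fun y => ∫ s in ystar..y, h s * F s with hI
  -- key identity
  have hkey : ∀ y : ℝ, ystar ≤ y → N y + 2 * I y = 2 * F y - 2 * F ystar := by
    intro y hy'
    have hy0 : 0 < y := lt_of_lt_of_le hy hy'
    have := integral_eq_sub_of_hasDerivAt (f := fun y => 2 * F y)
      (f' := fun s => s * F s + 2 * (h s * F s)) (a := ystar) (b := y)
      (fun x hx => hdF x (Set.mem_Ioi.mp (hsub ystar y hy hy0 hx)))
      (((hiiN ystar y hy hy0).add ((hiiI ystar y hy hy0).const_mul 2)))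
    rw [intervalIntegral.integral_add (hiiN ystar y hy hy0)
        ((hiiI ystar y hy hy0).const_mul 2),
      intervalIntegral.integral_const_mul] at this
    rw [hN, hI]
    simpa using this
  have hInn : ∀ y : ℝ, ystar ≤ y → 0 ≤ I y := by
    intro y hy'
    apply intervalIntegral.integral_nonneg hy'
    intro x hx
    have hx0 : 0 < x := lt_of_lt_of_le hy hx.1
    exact mul_nonneg (h0 x hx0) (hFpos x).le
  have hNle : ∀ y : ℝ, ystar ≤ y → N y ≤ 2 * F y := by
    intro y hy'
    have := hkey y hy'
    have := hInn y hy'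
    have := hFpos ystar
    linarith
  -- the bound on I y for large y
  have hIb : ∀ y : ℝ, 2 * ystar ≤ y → 16 / 3 ≤ y →
      I y ≤ 2 * ε / ystar * (y * Real.exp (-y)) * F y + 16 * ε / y ^ 2 * F y := by
    intro y hy2 hy163
    have hy0 : 0 < y := by linarith
    have hyh : ystar ≤ y / 2 := by linarith
    have hyh0 : 0 < y / 2 := by linarith
    have hy' : ystar ≤ y := by linarith
    -- split
    have hsplit : I y = (∫ s in ystar..y/2, h s * F s) + ∫ s in (y/2)..y, h s * F s := by
      rw [hI]
      exact (integral_add_adjacent_intervals (hiiI ystar (y/2) hy hyh0)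
        (hiiI (y/2) y hyh0 hy0)).symm
    -- piece 1
    have hp1 : (∫ s in ystar..y/2, h s * F s) ≤ 2 * ε / ystar * ((y/2 - ystar) * F (y/2)) := by
      have := intervalIntegral.integral_mono_on (a := ystar) (b := y/2)
        (f := fun s => h s * F s) (g := fun _ => 2 * ε / ystar * F (y/2)) hyh
        (hiiI ystar (y/2) hy hyh0) intervalIntegrable_const ?_
      · rw [intervalIntegral.integral_const, smul_eq_mul] at this
        calc (∫ s in ystar..y/2, h s * F s) ≤ (y/2 - ystar) * (2 * ε / ystar * F (y/2)) := this
          _ = 2 * ε / ystar * ((y/2 - ystar) * F (y/2)) := by ring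
      · intro x hx
        have hx0 : 0 < x := lt_of_lt_of_le hy hx.1
        have h1 : h x ≤ 2 * ε / ystar := (hb x hx0).trans (by
          apply div_le_div_of_nonneg_left (by positivity) hy hx.1)
        have h2 : F x ≤ F (y/2) := hemono x (y/2) hx.1 hx.2
        exact mul_le_mul h1 h2 (hFpos x).le (by positivity)
    -- F (y/2) ≤ exp(-y) * F y
    have hFhalf : F (y/2) ≤ Real.exp (-y) * F y := by
      rw [hF, ← Real.exp_add]
      apply Real.exp_le_exp.mpr
      have hGd2 : G (y/2) + (∫ s in (y/2)..y, h s) = G y := hGadd (y/2) y hyh0 hy0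
      have hInn2 : (0:ℝ) ≤ ∫ s in (y/2)..y, h s := by
        apply intervalIntegral.integral_nonneg (by linarith)
        intro x hx
        exact h0 x (lt_of_lt_of_le hyh0 hx.1)
      have hsq : y ≤ 3 * y ^ 2 / 16 := by nlinarith
      have : (y/2) ^ 2 / 4 + 3 * y ^ 2 / 16 = y ^ 2 / 4 := by ring
      linarith
    -- piece 2
    have hp2 : (∫ s in (y/2)..y, h s * F s) ≤ 8 * ε / y ^ 2 * N y := by
      have step : (∫ s in (y/2)..y, h s * F s) ≤ ∫ s in (y/2)..y, 8 * ε / y ^ 2 * (s * F s) := by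
        apply intervalIntegral.integral_mono_on (by linarith)
          (hiiI (y/2) y hyh0 hy0)
          ((hiiN (y/2) y hyh0 hy0).const_mul _)
        intro x hx
        have hx0 : 0 < x := lt_of_lt_of_le hyh0 hx.1
        have h1 : h x ≤ 8 * ε / y ^ 2 * x := by
          refine (hb x hx0).trans ?_
          rw [div_le_iff₀ hx0]
          have h4 : y ^ 2 ≤ 4 * x ^ 2 := by nlinarith [hx.1]
          have hy2' : (0:ℝ) < y ^ 2 := by positivity
          have he : 8 * ε / y ^ 2 * x * x = 8 * ε * x ^ 2 / y ^ 2 := by ring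
          rw [he, le_div_iff₀ hy2']
          nlinarith
        calc h x * F x ≤ (8 * ε / y ^ 2 * x) * F x :=
              mul_le_mul_of_nonneg_right h1 (hFpos x).le
          _ = 8 * ε / y ^ 2 * (x * F x) := by ring
      rw [intervalIntegral.integral_const_mul] at step
      refine step.trans ?_
      apply mul_le_mul_of_nonneg_left _ (by positivity)
      -- ∫ y/2..y s F ≤ N y
      have hsplitN : N y = (∫ s in ystar..y/2, s * F s) + ∫ s in (y/2)..y, s * F s := by
        rw [hN]
        exact (integral_add_adjacent_intervals (hiiN ystar (y/2) hy hyh0)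
          (hiiN (y/2) y hyh0 hy0)).symm
      have hnn1 : (0:ℝ) ≤ ∫ s in ystar..y/2, s * F s := by
        apply intervalIntegral.integral_nonneg hyh
        intro x hx
        exact mul_nonneg (le_of_lt (lt_of_lt_of_le hy hx.1)) (hFpos x).le
      linarith
    have hNle' : N y ≤ 2 * F y := hNle y hy'
    have hc1 : 2 * ε / ystar * ((y/2 - ystar) * F (y/2)) ≤
        2 * ε / ystar * (y * Real.exp (-y)) * F y := by
      have e1 : (y/2 - ystar) * F (y/2) ≤ y * (Real.exp (-y) * F y) :=
        mul_le_mul (by linarith) hFhalf (hFpos _).le (by linarith)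
      calc 2 * ε / ystar * ((y/2 - ystar) * F (y/2))
          ≤ 2 * ε / ystar * (y * (Real.exp (-y) * F y)) :=
            mul_le_mul_of_nonneg_left e1 (by positivity)
        _ = 2 * ε / ystar * (y * Real.exp (-y)) * F y := by ring
    have hc2 : 8 * ε / y ^ 2 * N y ≤ 16 * ε / y ^ 2 * F y := by
      have := mul_le_mul_of_nonneg_left hNle' (show (0:ℝ) ≤ 8 * ε / y ^ 2 by positivity)
      calc 8 * ε / y ^ 2 * N y ≤ 8 * ε / y ^ 2 * (2 * F y) := this
        _ = 16 * ε / y ^ 2 * F y := by ring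
    linarith [hsplit, hp1, hp2, hc1, hc2]
  -- I y / F y → 0
  have t2 : Tendsto (fun y => I y / F y) atTop (nhds 0) := by
    apply squeeze_zero' (g := fun y => 2 * ε / ystar * (y * Real.exp (-y)) + 16 * ε / y ^ 2)
    · filter_upwards [eventually_ge_atTop ystar] with y hy'
      exact div_nonneg (hInn y hy') (hFpos y).le
    · filter_upwards [eventually_ge_atTop (2 * ystar), eventually_ge_atTop (16/3 : ℝ)]
        with y hy2 hy163
      rw [div_le_iff₀ (hFpos y)]
      calc I y ≤ 2 * ε / ystar * (y * Real.exp (-y)) * F y + 16 * ε / y ^ 2 * F y :=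
            hIb y hy2 hy163
        _ = (2 * ε / ystar * (y * Real.exp (-y)) + 16 * ε / y ^ 2) * F y := by ring
    · have ta : Tendsto (fun y : ℝ => y * Real.exp (-y)) atTop (nhds 0) := by
        have := Real.tendsto_pow_mul_exp_neg_atTop_nhds_zero 1
        simpa using this
      have tb : Tendsto (fun y : ℝ => 16 * ε / y ^ 2) atTop (nhds 0) :=
        Tendsto.div_atTop tendsto_const_nhds (tendsto_pow_atTop two_ne_zero)
      have := (ta.const_mul (2 * ε / ystar)).add tb
      simpa using this
  -- F ystar / F y → 0
  have t1 : Tendsto (fun y => F ystar / F y) atTop (nhds 0) :=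
    Tendsto.div_atTop tendsto_const_nhds part1
  constructor
  · exact part1
  · have tfin : Tendsto (fun y => 1 - F ystar / F y - I y / F y) atTop (nhds 1) := by
      have := (tendsto_const_nhds (x := (1:ℝ)) (f := atTop)).sub t1 |>.sub t2
      simpa using this
    apply tfin.congr'
    filter_upwards [eventually_ge_atTop ystar] with y hy'
    have hFy := hFpos y
    have hk := hkey y hy'
    show 1 - F ystar / F y - I y / F y = N y / (2 * F y)
    field_simp
    rw [show N y = 2 * F y - 2 * F ystar - 2 * I y from by linarith]
    ring

/-- Asymptotics of the integrating factor `f` and of `∫_{y*}^y s f(s) ds / (2 f(y))`. -/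
theorem integrating_factor_asymptotics (d : ℕ) (hd : 3 ≤ d) (σ ε ystar : ℝ)
    (hσ : 0 < σ) (hε : ε ∈ Set.Ioo (0 : ℝ) 1) (hy : 0 < ystar)
    (M : ℝ → ℝ) (hM : ContDiffOn ℝ 1 M (Set.Ioi 0))
    (hM0 : ∀ y : ℝ, 0 < y → 0 ≤ M y ∧ M y ≤ 2 * ε * σ * y ^ (d - 2))
    (hint : IntegrableOn (fun s => M s / (σ * s ^ (d - 1))) (Set.Ioo 0 ystar)) :
    Tendsto (fun y : ℝ =>
        Real.exp (y ^ 2 / 4 - ∫ s in y..ystar, M s / (σ * s ^ (d - 1))))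
      atTop atTop ∧
    Tendsto (fun y : ℝ =>
        (∫ s in ystar..y, s *
            Real.exp (s ^ 2 / 4 - ∫ τ in s..ystar, M τ / (σ * τ ^ (d - 1)))) /
          (2 * Real.exp (y ^ 2 / 4 - ∫ s in y..ystar, M s / (σ * s ^ (d - 1)))))
      atTop (nhds 1) := by
  obtain ⟨hε0, -⟩ := hε
  have hc : ContinuousOn (fun s => M s / (σ * s ^ (d - 1))) (Set.Ioi 0) := by
    apply ContinuousOn.div (hM.continuousOn)
      ((continuous_const.mul (continuous_pow _)).continuousOn)
    intro s hs
    have h1 : (0:ℝ) < s := hs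
    exact mul_ne_zero hσ.ne' (pow_ne_zero _ h1.ne')
  have h0 : ∀ s : ℝ, 0 < s → 0 ≤ M s / (σ * s ^ (d - 1)) := by
    intro s hs
    exact div_nonneg (hM0 s hs).1 (by positivity)
  have hbnd : ∀ s : ℝ, 0 < s → M s / (σ * s ^ (d - 1)) ≤ 2 * ε / s := by
    intro s hs
    have key : 2 * ε * σ * s ^ (d - 2) / (σ * s ^ (d - 1)) = 2 * ε / s := by
      rw [show d - 1 = (d - 2) + 1 from by omega, pow_succ]
      have h1 : s ^ (d - 2) ≠ 0 := by positivity
      field_simp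
    calc M s / (σ * s ^ (d - 1)) ≤ 2 * ε * σ * s ^ (d - 2) / (σ * s ^ (d - 1)) := by
          have hden : (0:ℝ) < σ * s ^ (d - 1) := by positivity
          exact div_le_div_of_nonneg_right (hM0 s hs).2 hden.le
      _ = 2 * ε / s := key
  have H := aux_asym ε ystar hε0 hy (fun s => M s / (σ * s ^ (d - 1))) hc h0 hbnd
  simp only [intervalIntegral.integral_symm ystar, sub_neg_eq_add]
  exact H
end
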